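/- arXiv:2601.06930 — 2 statements merged into one kernel-verified Lean document; each statement's English description precedes it below -/
import Mathlib

section
/- Let T be an LR tableau of shape λ/μ and weight ν on [2n] with left companion chain μ = μ^{(2n)} ⊇ ⋯ ⊇ μ^{(1)}. Then T(k,1) = k for all ℓ(μ) < k ≤ ℓ(λ) (vacuously if ℓ(λ) = ℓ(μ)) if and only if ℓ(μ^{(2n)}) > ℓ(μ^{(2n−1)}) > ⋯ > ℓ(μ^{(2n−ℓ(μ)+1)}) > ℓ(μ^{(2n−ℓ(μ))}) = ⋯ = ℓ(μ^{(1)}) = 0; in this case the first column of G_μ(T) has entries 2n, 2n−1, …, 2n−ℓ(μ)+1 from bottom to top... i.e., G_μ(T)(k,1) = 2n−ℓ(μ)+k for 1 ≤ k ≤ ℓ(μ). -/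
/-- A partition: weakly decreasing, eventually-zero sequence of naturals.
`part k` is the `k`-th part (1-indexed; `part 0` is a dummy value ≥ `part 1`). -/
structure YPart where
  part : ℕ → ℕ
  antitone : ∀ i j : ℕ, i ≤ j → part j ≤ part i
  evZero : ∃ N, ∀ k, N ≤ k → part k = 0

/-- The number of nonzero parts (length) of a partition. -/
noncomputable def YPart.len (p : YPart) : ℕ := sSup {k | 1 ≤ k ∧ p.part k ≠ 0}

/-- Containment of partitions (Young diagrams). -/
def YPart.Sub (m l : YPart) : Prop := ∀ k, m.part k ≤ l.part k

/-- A partition is even if `ν_{2i-1} = ν_{2i}` for all `i ≥ 1`. -/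
def YPart.IsEven (p : YPart) : Prop := ∀ i : ℕ, p.part (2*i+1) = p.part (2*i+2)

/-- The empty partition. -/
def YPart.zero : YPart := ⟨fun _ => 0, fun _ _ _ => Nat.le_refl 0, ⟨0, fun _ _ => rfl⟩⟩

/-- Cell `(k,j)` (1-indexed, matrix style) lies in the skew shape `λ/μ`. -/
def InShape (l m : YPart) (k j : ℕ) : Prop :=
  1 ≤ k ∧ m.part k < j ∧ j ≤ l.part k

/-- A semistandard skew tableau of shape `λ/μ` with entries in `[N] = {1,…,N}`;
entries outside the skew shape (including the cells of `μ`) are normalized to `0`. -/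
structure IsSSYT (l m : YPart) (N : ℕ) (T : ℕ → ℕ → ℕ) : Prop where
  pos : ∀ k j, InShape l m k j → 1 ≤ T k j ∧ T k j ≤ N
  rowLe : ∀ k j, InShape l m k j → InShape l m k (j+1) → T k j ≤ T k (j+1)
  colLt : ∀ k j, InShape l m k j → InShape l m (k+1) j → T k j < T (k+1) j
  outside : ∀ k j, ¬ InShape l m k j → T k j = 0

/-- The number of cells of `λ/μ` with entry `i` whose position satisfies `P`. -/
noncomputable def cnt (l m : YPart) (T : ℕ → ℕ → ℕ) (P : ℕ → ℕ → Prop) (i : ℕ) : ℕ :=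
  {c : ℕ × ℕ | InShape l m c.1 c.2 ∧ T c.1 c.2 = i ∧ P c.1 c.2}.ncard

/-- A Littlewood–Richardson tableau of shape `λ/μ` and weight `ν` on `[N]`:
a semistandard skew tableau whose reverse row reading word (rows right to left,
top to bottom) is Yamanouchi of weight `ν`.  The Yamanouchi condition is stated
on all prefixes of the reverse row word: a prefix ends at a cell `(k,j)` and
consists of all cells in earlier rows together with the cells `(k,b)`, `b ≥ j`. -/
structure IsLR (l m nu : YPart) (N : ℕ) (T : ℕ → ℕ → ℕ) : Prop where
  ssyt : IsSSYT l m N T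
  weight : ∀ i, 1 ≤ i → cnt l m T (fun _ _ => True) i = nu.part i
  yam : ∀ k j i, 1 ≤ i →
    cnt l m T (fun a b => a < k ∨ (a = k ∧ j ≤ b)) (i+1) ≤
    cnt l m T (fun a b => a < k ∨ (a = k ∧ j ≤ b)) i

/-- The Sundaram property: every odd entry `2i+1` lies in row `n+i` or above. -/
def Sundaram (n : ℕ) (l m : YPart) (T : ℕ → ℕ → ℕ) : Prop :=
  ∀ k j i, InShape l m k j → T k j = 2*i + 1 → k ≤ n + i

/-- A Sundaram violation occurs in row `k`: some odd entry `2i+1` appears in row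
`k` with `k > n+i`. -/
def SundViolRow (n : ℕ) (l m : YPart) (T : ℕ → ℕ → ℕ) (k : ℕ) : Prop :=
  ∃ j i, InShape l m k j ∧ T k j = 2*i + 1 ∧ n + i < k

/-- The symplectic (King/Kwon) condition on a straight-shape tableau `G` of shape `g`:
`G(k,1) ≥ 2k−1` for every row `k` of `g`. -/
def IsSymplectic (g : YPart) (G : ℕ → ℕ → ℕ) : Prop :=
  ∀ k, 1 ≤ k → k ≤ g.len → 2*k - 1 ≤ G k 1

/-- Row `i` of the partition `μ^{(mm)}` in the left-companion chain of `T`: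
with `mm = 2n - r + 1`, the partition `μ^{(mm)}` is the shape occupied by the
entries `< r` (including the `0`-entries on the cells of `μ`) in rows
`r, r+1, …, 2n` of `T`; its `i`-th row comes from row `2n - mm + i` of `T`. -/
noncomputable def compShape (l : YPart) (T : ℕ → ℕ → ℕ) (n mm i : ℕ) : ℕ :=
  {j : ℕ | 1 ≤ j ∧ j ≤ l.part (2*n - mm + i) ∧ T (2*n - mm + i) j < 2*n - mm + 1}.ncard

/-- The length (number of nonzero rows) of a shape given by its row-length function. -/
noncomputable def shapeLen (f : ℕ → ℕ) : ℕ := sSup {i | 1 ≤ i ∧ f i ≠ 0}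

/-- The entry of the left companion tableau `G_μ(T)` in cell `(k,j)`:
the least `mm` such that `(k,j)` is a cell of `μ^{(mm)}`. -/
noncomputable def leftCompanion (l : YPart) (T : ℕ → ℕ → ℕ) (n k j : ℕ) : ℕ :=
  sInf {mm | j ≤ compShape l T n mm k}

/-! ### Auxiliary lemmas -/

private lemma part_pos_iff (p : YPart) {k : ℕ} (hk : 1 ≤ k) : p.part k ≠ 0 ↔ k ≤ p.len := by
  obtain ⟨N, hN⟩ := p.evZero
  have hbdd : BddAbove {k | 1 ≤ k ∧ p.part k ≠ 0} := by
    refine ⟨N, fun x hx => ?_⟩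
    by_contra h
    exact hx.2 (hN x (by omega))
  constructor
  · intro h
    exact le_csSup hbdd ⟨hk, h⟩
  · intro h hz
    have hne : {k | 1 ≤ k ∧ p.part k ≠ 0}.Nonempty := by
      by_contra hne
      rw [Set.not_nonempty_iff_eq_empty] at hne
      rw [YPart.len, hne] at h
      simp at h
      omega
    have hmem := Nat.sSup_mem hne hbdd
    have hle : p.part p.len ≤ p.part k := p.antitone k p.len h
    rw [hz] at hle
    exact hmem.2 (Nat.le_zero.mp hle)

private lemma cnt_set_finite (l m : YPart) (T : ℕ → ℕ → ℕ) (P : ℕ → ℕ → Prop) (i : ℕ) :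
    {c : ℕ × ℕ | InShape l m c.1 c.2 ∧ T c.1 c.2 = i ∧ P c.1 c.2}.Finite := by
  obtain ⟨N, hN⟩ := l.evZero
  apply Set.Finite.subset ((Set.finite_Icc 1 N).prod (Set.finite_Icc 1 (l.part 0)))
  intro c hc
  obtain ⟨⟨ha, hm, hb⟩, -, -⟩ := hc
  have hN' : c.1 ≤ N := by
    by_contra h
    have := hN c.1 (by omega)
    omega
  exact Set.mem_prod.mpr ⟨Set.mem_Icc.mpr ⟨ha, hN'⟩,
    Set.mem_Icc.mpr ⟨by omega, le_trans hb (l.antitone 0 c.1 (Nat.zero_le _))⟩⟩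

private lemma one_le_cnt {l m : YPart} {T : ℕ → ℕ → ℕ} {P : ℕ → ℕ → Prop} {i : ℕ}
    (h : ∃ c : ℕ × ℕ, InShape l m c.1 c.2 ∧ T c.1 c.2 = i ∧ P c.1 c.2) :
    1 ≤ cnt l m T P i := by
  rw [cnt]
  exact (Set.ncard_pos (cnt_set_finite l m T P i)).mpr h

private lemma cnt_eq_zero {l m : YPart} {T : ℕ → ℕ → ℕ} {P : ℕ → ℕ → Prop} {i : ℕ}
    (h : ∀ c : ℕ × ℕ, InShape l m c.1 c.2 → T c.1 c.2 = i → ¬ P c.1 c.2) :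
    cnt l m T P i = 0 := by
  rw [cnt]
  rw [Set.ncard_eq_zero (cnt_set_finite l m T P i)]
  ext c
  simp only [Set.mem_setOf_eq, Set.mem_empty_iff_false, iff_false, not_and]
  exact fun h1 h2 => h c h1 h2

private lemma compShape_set_finite (lam : YPart) (T : ℕ → ℕ → ℕ) (r k : ℕ) :
    {j : ℕ | 1 ≤ j ∧ j ≤ lam.part k ∧ T k j < r}.Finite :=
  Set.Finite.subset (Set.finite_Icc 1 (lam.part k)) (fun j hj => ⟨hj.1, hj.2.1⟩)

private lemma rowMono {l m : YPart} {N : ℕ} {T : ℕ → ℕ → ℕ} (h : IsSSYT l m N T)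
    {a b c : ℕ} (hb : InShape l m a b) (hbc : b ≤ c) (hc : c ≤ l.part a) :
    T a b ≤ T a c := by
  induction c, hbc using Nat.le_induction with
  | base => exact le_refl _
  | succ c hbc ih =>
    obtain ⟨ha1, hmb, hlb⟩ := hb
    have hcs : InShape l m a c := ⟨ha1, by omega, by omega⟩
    have hcs1 : InShape l m a (c+1) := ⟨ha1, by omega, hc⟩
    exact le_trans (ih (by omega)) (h.rowLe a c hcs hcs1)

/-- In an LR tableau, every entry in row `a` is at most `a`. -/
private lemma entry_le_row {lam mu nu : YPart} {N : ℕ} {T : ℕ → ℕ → ℕ}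
    (hT : IsLR lam mu nu N T) : ∀ a b, InShape lam mu a b → T a b ≤ a := by
  intro a
  induction a using Nat.strong_induction_on with
  | _ a ih =>
  intro b hb
  by_contra hgt
  push_neg at hgt
  have ha1 : 1 ≤ a := hb.1
  set i := T a b with hi
  have hi2 : 2 ≤ i := by omega
  have hne : {c | InShape lam mu a c ∧ T a c = i}.Nonempty := ⟨b, hb, rfl⟩
  have hmem := Nat.sInf_mem hne
  set b0 := sInf {c | InShape lam mu a c ∧ T a c = i} with hb0
  obtain ⟨hb0s, hb0v⟩ := hmem
  have key := hT.yam a b0 (i-1) (by omega)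
  rw [show i - 1 + 1 = i by omega] at key
  have h1 : 1 ≤ cnt lam mu T (fun x y => x < a ∨ (x = a ∧ b0 ≤ y)) i :=
    one_le_cnt ⟨(a, b0), hb0s, hb0v, Or.inr ⟨rfl, le_refl _⟩⟩
  have h0 : cnt lam mu T (fun x y => x < a ∨ (x = a ∧ b0 ≤ y)) (i-1) = 0 := by
    apply cnt_eq_zero
    rintro c hs hv (hx | ⟨hx, hy⟩)
    · have := ih c.1 hx c.2 hs
      omega
    · rw [hx] at hv hs
      have := rowMono hT.ssyt hb0s hy hs.2.2
      omega
  omega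

/-- Rows inside `μ` always contribute a nonzero row to the companion shape. -/
private lemma compShape_pos {lam mu nu : YPart} {n : ℕ} {T : ℕ → ℕ → ℕ}
    (hsub : mu.Sub lam) (hT : IsLR lam mu nu (2*n) T)
    {mm i : ℕ} (hi : 1 ≤ i) (hrow : 2*n - mm + i ≤ mu.len) :
    1 ≤ compShape lam T n mm i := by
  rw [compShape]
  set k := 2*n - mm + i with hk
  have hk1 : 1 ≤ k := by omega
  have hmu : 1 ≤ mu.part k := Nat.one_le_iff_ne_zero.mpr ((part_pos_iff mu hk1).mpr hrow)
  have hlam : 1 ≤ lam.part k := le_trans hmu (hsub k)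
  have hT0 : T k 1 = 0 := by
    apply hT.ssyt.outside
    rintro ⟨-, h2, -⟩
    omega
  exact (Set.ncard_pos (compShape_set_finite lam T _ _)).mpr
    ⟨1, le_refl _, hlam, by rw [hT0]; omega⟩

/-- Under the first-column condition, rows strictly below `μ` contribute nothing. -/
private lemma compShape_zero {lam mu nu : YPart} {n : ℕ} {T : ℕ → ℕ → ℕ}
    (hsub : mu.Sub lam) (hT : IsLR lam mu nu (2*n) T)
    (hcol : ∀ k, mu.len < k → k ≤ lam.len → T k 1 = k)
    {mm i : ℕ} (hmm : mm ≤ 2*n) (hi : 1 ≤ i) (hrow : mu.len < 2*n - mm + i) :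
    compShape lam T n mm i = 0 := by
  rw [compShape, Set.ncard_eq_zero (compShape_set_finite lam T _ _)]
  ext j
  simp only [Set.mem_setOf_eq, Set.mem_empty_iff_false, iff_false, not_and]
  set k := 2*n - mm + i with hk
  rintro hj1 hjl hjt
  have hk1 : 1 ≤ k := by omega
  have hklen : k ≤ lam.len := (part_pos_iff lam hk1).mp (by omega)
  have hmu0 : mu.part k = 0 := by
    by_contra h
    have := (part_pos_iff mu hk1).mp h
    omega
  have hT1 : T k 1 = k := hcol k (by omega) hklen
  have hmono := rowMono hT.ssyt (⟨hk1, by omega, by omega⟩ : InShape lam mu k 1) hj1 hjl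
  omega

private lemma shapeLen_eq {f : ℕ → ℕ} {M : ℕ}
    (h : ∀ i, 1 ≤ i → (f i ≠ 0 ↔ i ≤ M)) : shapeLen f = M := by
  apply le_antisymm
  · exact csSup_le' (fun x hx => (h x hx.1).mp hx.2)
  · rcases Nat.eq_zero_or_pos M with hM | hM
    · omega
    · exact le_csSup ⟨M, fun x hx => (h x hx.1).mp hx.2⟩ ⟨hM, (h M hM).mpr (le_refl M)⟩

private lemma compShape_bdd (lam : YPart) (T : ℕ → ℕ → ℕ) (n mm : ℕ) :
    ∃ N, ∀ i, N ≤ i → compShape lam T n mm i = 0 := by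
  obtain ⟨N, hN⟩ := lam.evZero
  refine ⟨N, fun i hi => ?_⟩
  rw [compShape, Set.ncard_eq_zero (compShape_set_finite lam T _ _)]
  ext j
  simp only [Set.mem_setOf_eq, Set.mem_empty_iff_false, iff_false, not_and]
  rintro h1 h2
  rw [hN (2*n-mm+i) (by omega)] at h2
  omega

/-- `T(k,1) = k` for all `ℓ(μ) < k ≤ ℓ(λ)` iff the lengths of the
left-companion chain strictly decrease down to `μ^{(2n−ℓ(μ))}` and vanish from
there on; in that case the first column of `G_μ(T)` is `2n−ℓ(μ)+k` in row `k`. -/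
theorem stmt16 (n : ℕ) (lam mu nu : YPart) (hl : lam.len ≤ 2*n)
    (hsub : mu.Sub lam) (T : ℕ → ℕ → ℕ) (hT : IsLR lam mu nu (2*n) T) :
    ((∀ k, mu.len < k → k ≤ lam.len → T k 1 = k) ↔
      ((∀ mm, 2*n - mu.len + 1 ≤ mm → mm ≤ 2*n →
          shapeLen (compShape lam T n (mm-1)) < shapeLen (compShape lam T n mm)) ∧
       (∀ mm, 1 ≤ mm → mm ≤ 2*n - mu.len →
          shapeLen (compShape lam T n mm) = 0))) ∧
    ((∀ k, mu.len < k → k ≤ lam.len → T k 1 = k) →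
      ∀ k, 1 ≤ k → k ≤ mu.len → leftCompanion lam T n k 1 = 2*n - mu.len + k) := by
  have hL2 : mu.len ≤ lam.len := by
    rcases Nat.eq_zero_or_pos mu.len with h | h
    · omega
    · have h1 := (part_pos_iff mu h).mpr (le_refl _)
      refine (part_pos_iff lam h).mp (fun hz => h1 ?_)
      have := hsub mu.len
      omega
  have hL2n : mu.len ≤ 2*n := le_trans hL2 hl
  constructor
  · constructor
    · -- forward direction
      intro hcol
      have hchar : ∀ mm, mm ≤ 2*n →
          shapeLen (compShape lam T n mm) = mm - (2*n - mu.len) := by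
        intro mm hmm
        apply shapeLen_eq
        intro i hi
        constructor
        · intro hne
          by_contra hgt
          exact hne (compShape_zero hsub hT hcol hmm hi (by omega))
        · intro hle
          have := compShape_pos hsub hT hi (by omega : 2*n - mm + i ≤ mu.len)
          omega
      refine ⟨fun mm h1 h2 => ?_, fun mm h1 h2 => ?_⟩
      · rw [hchar mm h2, hchar (mm-1) (by omega)]
        omega
      · rw [hchar mm (by omega)]
        omega
    · -- backward direction
      rintro ⟨h1, h2⟩ k hkL hklam
      have hk2n : k ≤ 2*n := le_trans hklam hl
      have hk1 : 1 ≤ k := by omega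
      have hlam1 : 1 ≤ lam.part k :=
        Nat.one_le_iff_ne_zero.mpr ((part_pos_iff lam hk1).mpr hklam)
      have hmu0 : mu.part k = 0 := by
        by_contra h
        have := (part_pos_iff mu hk1).mp h
        omega
      have hshape : InShape lam mu k 1 := ⟨hk1, by omega, hlam1⟩
      have hub : T k 1 ≤ k := entry_le_row hT k 1 hshape
      set mm := 2*n + 1 - k with hmm
      have hS0 : shapeLen (compShape lam T n mm) = 0 := h2 mm (by omega) (by omega)
      have hf1 : compShape lam T n mm 1 = 0 := by
        by_contra h
        obtain ⟨N, hN⟩ := compShape_bdd lam T n mm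
        have hbdd : BddAbove {i | 1 ≤ i ∧ compShape lam T n mm i ≠ 0} := by
          refine ⟨N, fun x hx => ?_⟩
          by_contra hc
          exact hx.2 (hN x (by omega))
        have : 1 ≤ shapeLen (compShape lam T n mm) :=
          le_csSup hbdd ⟨le_refl 1, h⟩
        omega
      have hrw : 2*n - mm + 1 = k := by omega
      rw [compShape, hrw, Set.ncard_eq_zero (compShape_set_finite lam T _ _)] at hf1
      by_contra hne
      have hTk : T k 1 < k := by omega
      have : (1 : ℕ) ∈ ({j : ℕ | 1 ≤ j ∧ j ≤ lam.part k ∧ T k j < k} : Set ℕ) :=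
        ⟨le_refl 1, hlam1, hTk⟩
      rw [hf1] at this
      exact this
  · -- first column of the left companion
    intro hcol k hk1 hkL
    rw [leftCompanion]
    have hm0 : (2*n - mu.len + k) ∈ {mm | 1 ≤ compShape lam T n mm k} := by
      apply compShape_pos hsub hT hk1
      omega
    apply le_antisymm
    · exact Nat.sInf_le hm0
    · by_contra hlt
      push_neg at hlt
      have hmem := Nat.sInf_mem (⟨_, hm0⟩ : {mm | 1 ≤ compShape lam T n mm k}.Nonempty)
      set mm := sInf {mm | 1 ≤ compShape lam T n mm k} with hmmdef
      have hz := compShape_zero hsub hT hcol (mm := mm) (i := k) (by omega) hk1 (by omega)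
      have : (1:ℕ) ≤ compShape lam T n mm k := hmem
      omega
end

section
/- Let T be an LR tableau of shape λ/μ and even weight ν on the alphabet [2n] with ℓ(μ) ≤ n, and let G_μ(T) be its left companion. Then T fails the Sundaram property if and only if G_μ(T) fails the symplectic condition. Moreover, in that case, if n+t+1 is the minimal row of T with a Sundaram violation (t ≥ 0), then the maximal row of G_μ(T) with a symplectic violation lies in one of the cells (ℓ(μ),1), (ℓ(μ)−1,1), …, (ℓ(μ)−t,1) of the first column of G_μ(T). -/
section Aux

lemma YPart.bdd (p : YPart) : BddAbove {k | 1 ≤ k ∧ p.part k ≠ 0} := by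
  obtain ⟨N, hN⟩ := p.evZero
  exact ⟨N, fun x hx => by by_contra h; exact hx.2 (hN x (by omega))⟩

lemma YPart.le_len (p : YPart) {k : ℕ} (h1 : 1 ≤ k) (h2 : p.part k ≠ 0) : k ≤ p.len :=
  le_csSup p.bdd ⟨h1, h2⟩

lemma YPart.part_eq_zero (p : YPart) {k : ℕ} (h : p.len < k) : p.part k = 0 := by
  by_contra h2
  exact absurd (p.le_len (by omega) h2) (by omega)

lemma YPart.part_pos (p : YPart) {k : ℕ} (h1 : 1 ≤ k) (h2 : k ≤ p.len) : 1 ≤ p.part k := by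
  by_contra h
  have hz : ∀ x ∈ {k' | 1 ≤ k' ∧ p.part k' ≠ 0}, x ≤ k - 1 := by
    intro x hx
    by_contra hxk
    exact hx.2 (by have := p.antitone k x (by omega); omega)
  rcases Set.eq_empty_or_nonempty {k' | 1 ≤ k' ∧ p.part k' ≠ 0} with he | hne
  · have : p.len = 0 := by unfold YPart.len; rw [he]; exact csSup_empty
    omega
  · have : p.len ≤ k - 1 := csSup_le hne hz
    omega

variable {n : ℕ} {lam mu nu : YPart} {T : ℕ → ℕ → ℕ}

lemma inShape_of {a b : ℕ} (ha : mu.len < a) (hb : 1 ≤ b) (hb2 : b ≤ lam.part a) :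
    InShape lam mu a b :=
  ⟨by omega, by rw [mu.part_eq_zero ha]; omega, hb2⟩

lemma row_mono (hS : IsSSYT lam mu (2*n) T) {a b : ℕ} (ha : mu.len < a) (hb : 1 ≤ b) :
    ∀ d, b + d ≤ lam.part a → T a b ≤ T a (b + d) := by
  intro d
  induction d with
  | zero => intro _; exact le_rfl
  | succ d ih =>
      intro hd
      have h1 : b + d ≤ lam.part a := by omega
      calc T a b ≤ T a (b + d) := ih h1
        _ ≤ T a (b + d + 1) :=
          hS.rowLe a (b + d) (inShape_of ha (by omega) h1) (inShape_of ha (by omega) (by omega))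

lemma col_mono (hS : IsSSYT lam mu (2*n) T) {a : ℕ} (ha : mu.len < a) :
    ∀ d, 1 ≤ lam.part (a + d) → T a 1 + d ≤ T (a + d) 1 := by
  intro d
  induction d with
  | zero => intro _; simp
  | succ d ih =>
      intro hl
      have hl' : 1 ≤ lam.part (a + d + 1) := hl
      have h1 : 1 ≤ lam.part (a + d) := le_trans hl' (lam.antitone (a + d) (a + d + 1) (by omega))
      have h2 := ih h1
      have h3 := hS.colLt (a + d) 1 (inShape_of (by omega) le_rfl h1)
        (inShape_of (by omega) le_rfl hl')
      show T a 1 + (d + 1) ≤ T (a + d + 1) 1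
      omega

/-- `ρ ≤ ℓ(μ) + T(ρ,1)` for a first-column cell below `μ`. -/
lemma len_bound (hS : IsSSYT lam mu (2*n) T) {ρ : ℕ} (hρ : mu.len < ρ)
    (hlamρ : 1 ≤ lam.part ρ) : ρ ≤ mu.len + T ρ 1 := by
  have hla1 : 1 ≤ lam.part (mu.len + 1) :=
    le_trans hlamρ (lam.antitone (mu.len + 1) ρ (by omega))
  have h1 := (hS.pos (mu.len + 1) 1 (inShape_of (by omega) le_rfl hla1)).1
  have h2 := col_mono hS (a := mu.len + 1) (by omega) (ρ - (mu.len + 1))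
    (by rw [show mu.len + 1 + (ρ - (mu.len + 1)) = ρ by omega]; exact hlamρ)
  rw [show mu.len + 1 + (ρ - (mu.len + 1)) = ρ by omega] at h2
  omega

lemma cells_finite (hl : lam.len ≤ 2*n) (P : ℕ → ℕ → Prop) (i : ℕ) :
    {c : ℕ × ℕ | InShape lam mu c.1 c.2 ∧ T c.1 c.2 = i ∧ P c.1 c.2}.Finite := by
  apply Set.Finite.subset (Set.finite_Icc ((1,1) : ℕ × ℕ) (2*n, lam.part 1))
  intro c hc
  obtain ⟨⟨h1, h2, h3⟩, -, -⟩ := hc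
  simp only [Set.mem_Icc, Prod.le_def]
  refine ⟨⟨h1, by omega⟩, ?_, ?_⟩
  · exact le_trans (lam.le_len h1 (by omega)) hl
  · exact le_trans h3 (lam.antitone 1 c.1 h1)

end Aux

section Key
variable {n : ℕ} {lam mu nu : YPart} {T : ℕ → ℕ → ℕ}

/-- Borderline case: if `T(n+m,1) = 2m−1`, then the cell `(n+m+1,1)` exists and
carries entry `2m` (uses Yamanouchi and evenness of the weight). -/
lemma key (hl : lam.len ≤ 2*n) (hmu : mu.len ≤ n) (hnu : nu.IsEven)
    (hT : IsLR lam mu nu (2*n) T) (m : ℕ) (hm : 1 ≤ m)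
    (hsh : InShape lam mu (n+m) 1) (hT1 : T (n+m) 1 + 1 = 2*m) :
    InShape lam mu (n+m+1) 1 ∧ T (n+m+1) 1 = 2*m := by
  by_contra hcon
  -- Step 1: every cell with entry 2m lies in the "prefix ending at (n+m, 2)"
  have step : ∀ a b, InShape lam mu a b → T a b = 2*m →
      (a < n + m ∨ (a = n + m ∧ 2 ≤ b)) := by
    intro a b hab hTab
    rcases Nat.lt_trichotomy a (n+m) with h | h | h
    · exact Or.inl h
    · refine Or.inr ⟨h, ?_⟩
      by_contra hb
      have hb1 : mu.part a < b := hab.2.1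
      have hb1' : b = 1 := by omega
      rw [h, hb1'] at hTab
      omega
    · exfalso
      have hb1 : 1 ≤ b := by have := hab.2.1; omega
      have hla : 1 ≤ lam.part a := le_trans hb1 hab.2.2
      have hlk1 : 1 ≤ lam.part (n+m+1) := le_trans hla (lam.antitone (n+m+1) a (by omega))
      have hshk1 : InShape lam mu (n+m+1) 1 := inShape_of (by omega) le_rfl hlk1
      have hcol := hT.ssyt.colLt (n+m) 1 hsh hshk1
      have hne : T (n+m+1) 1 ≠ 2*m := fun he => hcon ⟨hshk1, he⟩
      have hge : 2*m + 1 ≤ T (n+m+1) 1 := by omega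
      have h5 := col_mono hT.ssyt (a := n+m+1) (by omega) (a - (n+m+1))
        (by rw [show n+m+1 + (a - (n+m+1)) = a by omega]; exact hla)
      rw [show n+m+1 + (a - (n+m+1)) = a by omega] at h5
      have h6 := row_mono hT.ssyt (a := a) (b := 1) (by omega) le_rfl (b - 1)
        (by rw [show 1 + (b-1) = b by omega]; exact hab.2.2)
      rw [show 1 + (b-1) = b by omega] at h6
      omega
  -- Step 2: counting
  set i : ℕ := T (n+m) 1 with hidef
  have hi1 : 1 ≤ i := by omega
  have hyam := hT.yam (n+m) 2 i hi1
  have hip1 : i + 1 = 2*m := hT1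
  have hA : cnt lam mu T (fun a b => a < n+m ∨ (a = n+m ∧ 2 ≤ b)) (i+1)
      = nu.part (2*m) := by
    rw [← hT.weight (2*m) (by omega)]
    unfold cnt
    congr 1
    ext c
    simp only [Set.mem_setOf_eq, hip1, and_true]
    constructor
    · rintro ⟨h1, h2, -⟩; exact ⟨h1, h2⟩
    · rintro ⟨h1, h2⟩; exact ⟨h1, h2, step c.1 c.2 h1 h2⟩
  have hB : cnt lam mu T (fun a b => a < n+m ∨ (a = n+m ∧ 2 ≤ b)) i
      < nu.part i := by
    rw [← hT.weight i hi1]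
    unfold cnt
    show {c : ℕ × ℕ | InShape lam mu c.1 c.2 ∧ T c.1 c.2 = i ∧ (c.1 < n+m ∨ (c.1 = n+m ∧ 2 ≤ c.2))}.ncard
      < {c : ℕ × ℕ | InShape lam mu c.1 c.2 ∧ T c.1 c.2 = i ∧ True}.ncard
    apply Set.ncard_lt_ncard _ (cells_finite hl (fun _ _ => True) i)
    constructor
    · intro c hc
      exact ⟨hc.1, hc.2.1, trivial⟩
    · intro hsub'
      have hmem : ((n+m, 1) : ℕ × ℕ) ∈
          {c : ℕ × ℕ | InShape lam mu c.1 c.2 ∧ T c.1 c.2 = i ∧ True} :=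
        ⟨hsh, rfl, trivial⟩
      have := hsub' hmem
      simp only [Set.mem_setOf_eq] at this
      omega
  have heven : nu.part i = nu.part (2*m) := by
    have := hnu (m-1)
    rw [show 2*(m-1)+1 = i by omega, show 2*(m-1)+2 = 2*m by omega] at this
    exact this
  omega

/-- If some first-column entry is too small, a Sundaram violation exists above. -/
lemma desc (hS : IsSSYT lam mu (2*n) T) (hmu : mu.len ≤ n) (c : ℕ) :
    ∀ ρ, n < ρ → 1 ≤ lam.part ρ → T ρ 1 = c → c + 2*n + 2 ≤ 2*ρ →
      ¬ Sundaram n lam mu T := by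
  induction c using Nat.strong_induction_on with
  | _ c ih =>
    intro ρ hρn hla hTc hineq hSund
    have hsh : InShape lam mu ρ 1 := inShape_of (by omega) le_rfl hla
    have hc1 : 1 ≤ c := by have := (hS.pos ρ 1 hsh).1; omega
    rcases Nat.even_or_odd c with he | ho
    · obtain ⟨m, hm⟩ := he
      have hm1 : 1 ≤ m := by omega
      have hla' : 1 ≤ lam.part (ρ-1) := le_trans hla (lam.antitone (ρ-1) ρ (by omega))
      have hsh' : InShape lam mu (ρ-1) 1 := inShape_of (by omega) le_rfl hla'
      have hshρ : InShape lam mu (ρ-1+1) 1 := by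
        rw [show ρ - 1 + 1 = ρ by omega]; exact hsh
      have hcol := hS.colLt (ρ-1) 1 hsh' hshρ
      rw [show ρ - 1 + 1 = ρ by omega] at hcol
      rcases Nat.even_or_odd (T (ρ-1) 1) with he' | ho'
      · obtain ⟨m', hm'⟩ := he'
        exact ih (T (ρ-1) 1) (by omega) (ρ-1) (by omega) hla' rfl (by omega) hSund
      · obtain ⟨i2, hi2⟩ := ho'
        have := hSund (ρ-1) 1 i2 hsh' (by omega)
        omega
    · obtain ⟨i2, hi2⟩ := ho
      have := hSund ρ 1 i2 hsh (by omega)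
      omega

end Key

section Gside
variable {n : ℕ} {lam mu nu : YPart} {T : ℕ → ℕ → ℕ}

/-- Produce a symplectic violation of the companion from a small first-column entry. -/
lemma sympViol_of {kk ρ : ℕ} (h1 : 1 ≤ kk) (hkn : kk ≤ n + 1)
    (hρ : ρ + kk = 2*n + 2) (hla : 1 ≤ lam.part ρ) (hTρ : T ρ 1 + kk ≤ ρ) :
    leftCompanion lam T n kk 1 < 2*kk - 1 := by
  have hmem : (2*kk - 2) ∈ {mm | 1 ≤ compShape lam T n mm kk} := by
    show 1 ≤ compShape lam T n (2*kk - 2) kk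
    unfold compShape
    rw [show 2*n - (2*kk - 2) + kk = ρ by omega]
    have hfin : {j : ℕ | 1 ≤ j ∧ j ≤ lam.part ρ ∧ T ρ j < 2*n - (2*kk-2) + 1}.Finite :=
      Set.Finite.subset (Set.finite_Icc 1 (lam.part ρ)) (fun x hx => ⟨hx.1, hx.2.1⟩)
    exact (Set.ncard_pos hfin).mpr ⟨1, le_rfl, hla, by omega⟩
  have := Nat.sInf_le hmem
  have hle : leftCompanion lam T n kk 1 ≤ 2*kk - 2 := this
  omega

/-- Extract a small first-column entry from a symplectic violation of the companion. -/
lemma sympViol_extract (hl : lam.len ≤ 2*n) (hS : IsSSYT lam mu (2*n) T)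
    (hsub : mu.Sub lam) (hmu : mu.len ≤ n) {kk : ℕ}
    (h1 : 1 ≤ kk) (h2 : kk ≤ mu.len) (hviol : leftCompanion lam T n kk 1 < 2*kk - 1) :
    ∃ ρ, 2*n + 2 ≤ ρ + kk ∧ ρ ≤ 2*n ∧ 1 ≤ lam.part ρ ∧ T ρ 1 + kk ≤ ρ := by
  have hSne : {mm | 1 ≤ compShape lam T n mm kk}.Nonempty := by
    refine ⟨2*n, ?_⟩
    show 1 ≤ compShape lam T n (2*n) kk
    unfold compShape
    rw [show 2*n - 2*n + kk = kk by omega]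
    have hμk : 1 ≤ mu.part kk := mu.part_pos h1 h2
    have hfin : {j : ℕ | 1 ≤ j ∧ j ≤ lam.part kk ∧ T kk j < 2*n - 2*n + 1}.Finite :=
      Set.Finite.subset (Set.finite_Icc 1 (lam.part kk)) (fun x hx => ⟨hx.1, hx.2.1⟩)
    refine (Set.ncard_pos hfin).mpr ⟨1, le_rfl, le_trans hμk (hsub kk), ?_⟩
    have hout : T kk 1 = 0 := hS.outside kk 1 (fun hsh => by have := hsh.2.1; omega)
    omega
  have hmem := Nat.sInf_mem hSne
  set mm := sInf {mm | 1 ≤ compShape lam T n mm kk} with hmmdef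
  have hviol' : mm < 2*kk - 1 := hviol
  have hmm2 : mm ≤ 2*kk - 2 := by omega
  have hcs : 1 ≤ compShape lam T n mm kk := hmem
  unfold compShape at hcs
  have hne : {j : ℕ | 1 ≤ j ∧ j ≤ lam.part (2*n - mm + kk) ∧
      T (2*n - mm + kk) j < 2*n - mm + 1}.Nonempty :=
    Set.nonempty_of_ncard_ne_zero (by omega)
  obtain ⟨j, hj1, hj2, hj3⟩ := hne
  set ρ := 2*n - mm + kk with hρdef
  have hρ1 : 2*n + 2 ≤ ρ + kk := by omega
  have hρμ : mu.len < ρ := by omega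
  have hrm := row_mono hS (a := ρ) (b := 1) hρμ le_rfl (j - 1)
    (by rw [show 1 + (j-1) = j by omega]; exact hj2)
  rw [show 1 + (j-1) = j by omega] at hrm
  have hρ2n : ρ ≤ 2*n := le_trans (lam.le_len (by omega) (by omega)) hl
  exact ⟨ρ, hρ1, hρ2n, by omega, by omega⟩

/-- From a Sundaram violation in row `k`, produce a symplectic violation of the
companion in a row `kk` with `kk + k ≥ 2n+1`. -/
lemma sund_to_symp (hl : lam.len ≤ 2*n) (hsub : mu.Sub lam) (hmu : mu.len ≤ n)
    (hnu : nu.IsEven) (hT : IsLR lam mu nu (2*n) T) {k : ℕ}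
    (hv : SundViolRow n lam mu T k) :
    ∃ kk, 1 ≤ kk ∧ kk ≤ mu.len ∧ 2*n + 1 ≤ kk + k ∧
      leftCompanion lam T n kk 1 < 2*kk - 1 := by
  obtain ⟨j, i, hsh, hTij, hik⟩ := hv
  have hkn : n < k := by omega
  have hb : 1 ≤ j := by have := hsh.2.1; omega
  have hμk : mu.len < k := by omega
  have hlak : 1 ≤ lam.part k := le_trans hb hsh.2.2
  have hrow := row_mono hT.ssyt (a := k) (b := 1) hμk le_rfl (j - 1)
    (by rw [show 1 + (j-1) = j by omega]; exact hsh.2.2)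
  rw [show 1 + (j-1) = j by omega] at hrow
  have hk2n : k ≤ 2*n := le_trans (lam.le_len (by omega) (by omega)) hl
  have hlb : k ≤ mu.len + T k 1 := len_bound hT.ssyt hμk hlak
  by_cases hcase : T k 1 + 2*n + 2 ≤ 2*k
  · -- generic case: violation at kk = 2n+2-k
    refine ⟨2*n + 2 - k, by omega, by omega, by omega, ?_⟩
    exact sympViol_of (by omega) (by omega) (by omega) hlak (by omega)
  · -- borderline case: T k 1 = 2(k-n) - 1
    have hTk1 : T k 1 + 1 = 2*(k - n) := by omega
    obtain ⟨hsh', hT'⟩ := key hl hmu hnu hT (k - n) (by omega)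
      (by rw [show n + (k - n) = k by omega]; exact inShape_of hμk le_rfl hlak)
      (by rw [show n + (k - n) = k by omega]; exact hTk1)
    rw [show n + (k - n) + 1 = k + 1 by omega] at hsh' hT'
    have hlak1 : 1 ≤ lam.part (k+1) := hsh'.2.2
    have hk2n' : k + 1 ≤ 2*n := le_trans (lam.le_len (by omega) (by omega)) hl
    have hlb' : k + 1 ≤ mu.len + T (k+1) 1 := len_bound hT.ssyt (by omega) hlak1
    refine ⟨2*n + 1 - k, by omega, by omega, by omega, ?_⟩
    exact sympViol_of (by omega) (by omega) (by omega) hlak1 (by omega)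

end Gside


/-- Main Theorem: An LR tableau `T` of even weight with
`ℓ(μ) ≤ n` fails the Sundaram property iff its left companion `G_μ(T)` fails
the symplectic condition; and if `n+t+1` is the minimal row of `T` with a
Sundaram violation, then the maximal row of `G_μ(T)` with a symplectic
violation is among the cells `(ℓ(μ),1), (ℓ(μ)−1,1), …, (ℓ(μ)−t,1)`. -/
theorem stmt18 (n : ℕ) (lam mu nu : YPart) (hl : lam.len ≤ 2*n)
    (hsub : mu.Sub lam) (hmu : mu.len ≤ n) (hnu : nu.IsEven) (T : ℕ → ℕ → ℕ)
    (hT : IsLR lam mu nu (2*n) T) :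
    (¬ Sundaram n lam mu T ↔ ¬ IsSymplectic mu (leftCompanion lam T n)) ∧
    (∀ t : ℕ, SundViolRow n lam mu T (n+t+1) →
      (∀ k, k < n+t+1 → ¬ SundViolRow n lam mu T k) →
      ∃ r, mu.len - t ≤ r ∧ r ≤ mu.len ∧
        leftCompanion lam T n r 1 < 2*r - 1 ∧
        ∀ k, r < k → k ≤ mu.len → 2*k - 1 ≤ leftCompanion lam T n k 1) := by
  constructor
  · constructor
    · intro hns
      unfold Sundaram at hns
      push_neg at hns
      obtain ⟨k, j, i, hsh, hTij, hik⟩ := hns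
      obtain ⟨kk, h1, h2, h3, h4⟩ :=
        sund_to_symp hl hsub hmu hnu hT ⟨j, i, hsh, hTij, hik⟩
      intro hsymp
      exact absurd (hsymp kk h1 h2) (by omega)
    · intro hnsymp
      unfold IsSymplectic at hnsymp
      push_neg at hnsymp
      obtain ⟨kk, h1, h2, h3⟩ := hnsymp
      obtain ⟨ρ, hρ1, hρ2, hρ3, hρ4⟩ := sympViol_extract hl hT.ssyt hsub hmu h1 h2 h3
      exact desc hT.ssyt hmu (T ρ 1) ρ (by omega) hρ3 rfl (by omega)
  · intro t hv _hmin
    obtain ⟨kk, h1, h2, h3, h4⟩ := sund_to_symp hl hsub hmu hnu hT hv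
    classical
    set V := (Finset.Icc 1 mu.len).filter
      (fun k => leftCompanion lam T n k 1 < 2*k - 1) with hV
    have hkkV : kk ∈ V := by
      simp only [hV, Finset.mem_filter, Finset.mem_Icc]
      exact ⟨⟨h1, h2⟩, h4⟩
    have hVne : V.Nonempty := ⟨kk, hkkV⟩
    have hrV := V.max'_mem hVne
    simp only [hV, Finset.mem_filter, Finset.mem_Icc] at hrV
    refine ⟨V.max' hVne, ?_, hrV.1.2, hrV.2, ?_⟩
    · have hle := V.le_max' kk hkkV
      omega
    · intro k hk1 hk2
      by_contra hcon
      have hkV : k ∈ V := by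
        simp only [hV, Finset.mem_filter, Finset.mem_Icc]
        exact ⟨⟨by omega, hk2⟩, by omega⟩
      have := V.le_max' k hkV
      omega
end
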